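/- Limit groups are locally indicable: every nontrivial finitely generated subgroup admits a surjective homomorphism onto ℤ. -/
import Mathlib


/-- A group is fully residually free if every finite subset can be mapped injectively
into a free group by a group homomorphism. -/
def IsFullyResiduallyFree (G : Type*) [Group G] : Prop :=
  ∀ S : Finset G, ∃ (ι : Type) (φ : G →* FreeGroup ι), Set.InjOn φ ↑S

/-- A limit group is a finitely generated fully residually free group. -/
def IsLimitGroup (G : Type*) [Group G] : Prop :=
  Group.FG G ∧ IsFullyResiduallyFree G

/-- A nontrivial free group surjects onto `ℤ`. -/
lemma free_group_surj_int (K : Type*) [Group K] [IsFreeGroup K] (hK : ∃ k : K, k ≠ 1) :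
    ∃ f : K →* Multiplicative ℤ, Function.Surjective f := by
  have hne : Nonempty (IsFreeGroup.Generators K) := by
    by_contra h
    have : IsEmpty (IsFreeGroup.Generators K) := not_nonempty_iff.mp h
    have : Subsingleton K :=
      (IsFreeGroup.toFreeGroup K).toEquiv.subsingleton
    obtain ⟨k, hk⟩ := hK
    exact hk (Subsingleton.elim k 1)
  obtain ⟨a⟩ := hne
  refine ⟨IsFreeGroup.lift (fun _ => Multiplicative.ofAdd 1), fun y => ?_⟩
  refine ⟨(IsFreeGroup.of a) ^ (Multiplicative.toAdd y), ?_⟩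
  rw [map_zpow, IsFreeGroup.lift_of]
  rw [← ofAdd_zsmul]
  simp

/-- **Limit groups are locally indicable**: every nontrivial finitely generated
subgroup of a limit group admits a surjective homomorphism onto `ℤ`. -/
theorem limit_group_locally_indicable {G : Type*} [Group G] (hG : IsLimitGroup G)
    (H : Subgroup G) (hne : H ≠ ⊥) (hfg : Group.FG H) :
    ∃ f : H →* Multiplicative ℤ, Function.Surjective f := by
  classical
  obtain ⟨h, hh, hh1⟩ := (Subgroup.bot_or_exists_ne_one H).resolve_left hne
  obtain ⟨ι, φ, hφ⟩ := hG.2 {h, 1}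
  have hφh : φ h ≠ 1 := by
    intro hc
    apply hh1
    apply hφ (by simp) (by simp)
    simpa using hc
  -- the image of H in the free group
  set ψ : H →* FreeGroup ι := φ.comp H.subtype with hψ
  set K := ψ.range with hKdef
  have hKne : ∃ k : K, k ≠ 1 := by
    refine ⟨⟨φ h, ⟨⟨h, hh⟩, rfl⟩⟩, ?_⟩
    simpa [Subtype.ext_iff] using hφh
  obtain ⟨f, hf⟩ := free_group_surj_int K hKne
  refine ⟨f.comp ψ.rangeRestrict, hf.comp ψ.rangeRestrict_surjective⟩
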